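/- Let $a_1,\ldots,a_n$ be distinct elements of a field $F$ and write $\prod_{i=1}^n(x-a_i) = \sum_{j=0}^n c_j x^{n-j}$. Let $C$ be the $n\times n$ matrix with $(i,j)$ entry $c_{n-1-i-j}$ for $i+j \leq n-1$ and $0$ otherwise (indices from $0$), let $V_n = (a_j^i)$, $V_0 = \mathrm{diag}(v_1,\ldots,v_n)$, $U = \mathrm{diag}(u_1/v_1,\ldots,u_n/v_n)$ with $u_i = \prod_{j\neq i}(a_i-a_j)^{-1}$ and $v_i \in F^*$. Then $V_n V_0 U V_n^{\mathrm{T}} C^{\mathrm{T}} = I_n$. -/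

import Mathlib

open Polynomial Finset in
lemma lag_coeff_stmt15 {F : Type*} [Field F] {n : ℕ} (a : Fin n → F)
    (ha : Function.Injective a) (i : Fin n) :
    (Lagrange.basis Finset.univ a i).coeff (n - 1) =
      (∏ j ∈ Finset.univ.erase i, (a i - a j))⁻¹ := by
  have h1 : (Lagrange.basis Finset.univ a i).natDegree = n - 1 := by
    simpa using Lagrange.natDegree_basis ha.injOn (Finset.mem_univ i)
  rw [← h1, Polynomial.coeff_natDegree, Lagrange.basis, Polynomial.leadingCoeff_prod,
    ← Finset.prod_inv_distrib]
  refine Finset.prod_congr rfl fun j hj => ?_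
  rw [Lagrange.basisDivisor, Polynomial.leadingCoeff_mul, Polynomial.leadingCoeff_C,
    (Polynomial.monic_X_sub_C _).leadingCoeff, mul_one]

open Polynomial Finset in
lemma sval_stmt15 {F : Type*} [Field F] {n : ℕ} (a : Fin n → F) (ha : Function.Injective a)
    {m : ℕ} (hm : m < n) :
    ∑ j : Fin n, (∏ k ∈ Finset.univ.erase j, (a j - a k))⁻¹ * a j ^ m =
      if m = n - 1 then 1 else 0 := by
  have h := Lagrange.eq_interpolate (s := Finset.univ) (v := a) (f := (X : F[X]) ^ m)
    ha.injOn (by simpa [Polynomial.degree_X_pow] using (by exact_mod_cast hm : (m : WithBot ℕ) < n))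
  have h2 := congrArg (fun p => p.coeff (n - 1)) h
  simp only [Lagrange.interpolate_apply, Polynomial.finset_sum_coeff, Polynomial.coeff_C_mul,
    Polynomial.coeff_X_pow, Polynomial.eval_pow, Polynomial.eval_X,
    lag_coeff_stmt15 a ha] at h2
  rw [show (if m = n - 1 then (1:F) else 0) = if n - 1 = m then 1 else 0 by
    simp only [eq_comm], h2]
  exact Finset.sum_congr rfl fun j _ => mul_comm _ _

open Polynomial Matrix in
/-- The identity `V_n V_0 U V_nᵀ Cᵀ = I_n` from the proof of Theorem 3. -/
theorem stmt_15 {F : Type*} [Field F] (n : ℕ)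
    (a : Fin n → F) (ha : Function.Injective a)
    (v : Fin n → F) (hv : ∀ i, v i ≠ 0)
    (u : Fin n → F)
    (hu : ∀ i, u i = (∏ j ∈ Finset.univ.erase i, (a i - a j))⁻¹)
    (c : ℕ → F)
    (hc : (∏ i : Fin n, (X - Polynomial.C (a i))) =
      ∑ j ∈ Finset.range (n + 1), Polynomial.C (c j) * X ^ (n - j))
    (Vn : Matrix (Fin n) (Fin n) F) (hVn : ∀ i j, Vn i j = a j ^ (i : ℕ))
    (Cm : Matrix (Fin n) (Fin n) F)
    (hCm : ∀ i j, Cm i j =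
      if (i : ℕ) + (j : ℕ) ≤ n - 1 then c (n - 1 - (i : ℕ) - (j : ℕ)) else 0) :
    Vn * Matrix.diagonal v * Matrix.diagonal (fun i => u i / v i) * Vnᵀ * Cmᵀ = 1 := by
  classical
  -- the key sum `s m = ∑ j, u j * a j ^ m`
  set s : ℕ → F := fun m => ∑ j : Fin n, u j * a j ^ m with hs
  -- (A) values of `s` in low degrees
  have hsA : ∀ m : ℕ, m < n → s m = if m = n - 1 then 1 else 0 := by
    intro m hm
    rw [hs]
    simp only [hu]
    exact sval_stmt15 a ha hm
  -- roots of the polynomial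
  have hroot : ∀ j : Fin n, ∑ t ∈ Finset.range (n + 1), c t * a j ^ (n - t) = 0 := by
    intro j
    have h := congrArg (Polynomial.eval (a j)) hc
    simp only [Polynomial.eval_prod, Polynomial.eval_finset_sum, Polynomial.eval_mul,
      Polynomial.eval_sub, Polynomial.eval_X, Polynomial.eval_C, Polynomial.eval_pow] at h
    rw [← h]
    exact Finset.prod_eq_zero (Finset.mem_univ j) (sub_self _)
  -- leading coefficient: c 0 = 1
  have hc0 : c 0 = 1 := by
    have hmon : (∏ i : Fin n, (X - Polynomial.C (a i))).Monic :=
      monic_prod_of_monic _ _ fun i _ => monic_X_sub_C _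
    have hdeg : (∏ i : Fin n, (X - Polynomial.C (a i))).natDegree = n := by
      rw [Polynomial.natDegree_prod _ _ fun i _ => X_sub_C_ne_zero _]
      simp
    have hcoeffn : (∏ i : Fin n, (X - Polynomial.C (a i))).coeff n = 1 := by
      have h' := hmon.coeff_natDegree
      rwa [hdeg] at h'
    have h := congrArg (fun p => p.coeff n) hc
    simp only [Polynomial.finset_sum_coeff, Polynomial.coeff_C_mul,
      Polynomial.coeff_X_pow] at h
    rw [hcoeffn] at h
    rw [Finset.sum_eq_single 0 (fun t ht ht0 => by
      have h1 : t ≤ n := Nat.lt_succ_iff.mp (Finset.mem_range.mp ht)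
      have : ¬ (n = n - t) := by omega
      simp [this]) (fun h0 => absurd (Finset.mem_range.mpr (Nat.succ_pos n)) h0)] at h
    simpa using h.symm
  -- (B) the recurrence
  have hB : ∀ r : ℕ, ∑ t ∈ Finset.range (n + 1), c t * s (r + n - t) = 0 := by
    intro r
    have hstep : ∀ t ∈ Finset.range (n + 1),
        c t * s (r + n - t) = ∑ j : Fin n, u j * a j ^ r * (c t * a j ^ (n - t)) := by
      intro t ht
      have h1 : t ≤ n := Nat.lt_succ_iff.mp (Finset.mem_range.mp ht)
      rw [hs, Finset.mul_sum]
      refine Finset.sum_congr rfl fun j _ => ?_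
      rw [show r + n - t = r + (n - t) by omega, pow_add]
      ring
    rw [Finset.sum_congr rfl hstep, Finset.sum_comm]
    refine Finset.sum_eq_zero fun j _ => ?_
    rw [← Finset.mul_sum, hroot j, mul_zero]
  -- collapse the diagonal matrices
  have hdiag : Vn * Matrix.diagonal v * Matrix.diagonal (fun i => u i / v i)
      = Vn * Matrix.diagonal u := by
    have hfun : (fun i => v i * (u i / v i)) = u := by
      funext i
      rw [mul_comm, div_mul_cancel₀ _ (hv i)]
    rw [Matrix.mul_assoc, Matrix.diagonal_mul_diagonal, hfun]
  rw [hdiag]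
  ext i l
  have hentry : ∀ (i k : Fin n), (Vn * Matrix.diagonal u) i k = a k ^ (i : ℕ) * u k :=
    fun i k => by rw [Matrix.mul_diagonal, hVn]
  simp only [Matrix.mul_apply, Matrix.transpose_apply, hentry, hVn, hCm, Matrix.one_apply]
  have hi : (i : ℕ) < n := i.isLt
  have hl : (l : ℕ) < n := l.isLt
  set m : ℕ := n - 1 - (l : ℕ) with hmdef
  have hinner : ∀ k : Fin n,
      (∑ j : Fin n, a j ^ (i : ℕ) * u j * a j ^ (k : ℕ)) = s ((i : ℕ) + (k : ℕ)) := by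
    intro k
    rw [hs]
    refine Finset.sum_congr rfl fun j _ => ?_
    rw [pow_add]; ring
  rw [Finset.sum_congr rfl fun k _ => by rw [hinner k]]
  rw [Fin.sum_univ_eq_sum_range (fun k => s ((i : ℕ) + k) *
      (if (l : ℕ) + k ≤ n - 1 then c (m - k) else 0)) n]
  have hsub : Finset.range (m + 1) ⊆ Finset.range n := by
    apply Finset.range_subset_range.mpr; omega
  have hred : ∑ k ∈ Finset.range n, s ((i : ℕ) + k) *
      (if (l : ℕ) + k ≤ n - 1 then c (m - k) else 0)
      = ∑ k ∈ Finset.range (m + 1), s ((i : ℕ) + k) * c (m - k) := by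
    rw [← Finset.sum_subset hsub (fun k _ hk => by
      have : ¬ ((l : ℕ) + k ≤ n - 1) := by
        simp only [Finset.mem_range, Nat.lt_succ_iff, not_le] at hk; omega
      rw [if_neg this, mul_zero])]
    refine Finset.sum_congr rfl fun k hk => ?_
    have hk' : k ≤ m := Nat.lt_succ_iff.mp (Finset.mem_range.mp hk)
    rw [if_pos (by omega)]
  rw [hred]
  by_cases hil : (i : ℕ) ≤ (l : ℕ)
  · by_cases hie : i = l
    · subst hie
      rw [if_pos rfl]
      rw [Finset.sum_eq_single_of_mem m (Finset.self_mem_range_succ m)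
        (fun k hk hkm => by
          have hk' : k ≤ m := Nat.lt_succ_iff.mp (Finset.mem_range.mp hk)
          rw [hsA _ (by omega), if_neg (by omega), zero_mul])]
      rw [Nat.sub_self, hc0, hsA _ (by omega), if_pos (by omega), one_mul]
    · rw [if_neg hie]
      have hilt : (i : ℕ) < (l : ℕ) :=
        lt_of_le_of_ne hil (fun h => hie (Fin.val_injective h))
      refine Finset.sum_eq_zero fun k hk => ?_
      have hk' : k ≤ m := Nat.lt_succ_iff.mp (Finset.mem_range.mp hk)
      rw [hsA _ (by omega), if_neg (by omega), zero_mul]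
  · have hilt : (l : ℕ) < (i : ℕ) := not_le.mp hil
    rw [if_neg (fun h => by simp [h] at hilt)]
    set r : ℕ := (i : ℕ) - (l : ℕ) - 1 with hrdef
    have hre : ∑ k ∈ Finset.range (m + 1), s ((i : ℕ) + k) * c (m - k)
        = ∑ t ∈ Finset.range (m + 1), c t * s (r + n - t) := by
      rw [← Finset.sum_range_reflect (fun t => c t * s (r + n - t)) (m + 1)]
      refine Finset.sum_congr rfl fun k hk => ?_
      have hk' : k ≤ m := Nat.lt_succ_iff.mp (Finset.mem_range.mp hk)
      rw [show m + 1 - 1 - k = m - k by omega,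
        show r + n - (m - k) = (i : ℕ) + k by omega, mul_comm]
    rw [hre]
    have hext : ∑ t ∈ Finset.range (m + 1), c t * s (r + n - t)
        = ∑ t ∈ Finset.range (n + 1), c t * s (r + n - t) := by
      apply Finset.sum_subset (Finset.range_subset_range.mpr (by omega))
      intro t ht htm
      have h1 : t ≤ n := Nat.lt_succ_iff.mp (Finset.mem_range.mp ht)
      have h2 : m + 1 ≤ t := by
        simp only [Finset.mem_range, Nat.lt_succ_iff, not_le] at htm; omega
      rw [hsA _ (by omega), if_neg (by omega), mul_zero]
    rw [hext, hB r]
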